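/- Let V be the inverse limit of an inverse sequence of finite-dimensional vector spaces V_i over a topological field K, with quotient maps Q_i : V → V_i. A vector subspace W ≤ V is closed in the inverse-limit topology if and only if W equals the intersection over all i of the preimages Q_i⁻¹(Q_i(W)). -/

import Mathlib

/-- The inverse limit of an inverse sequence of `K`-modules along the connecting
maps `q i : V (i+1) → V i`, realized as the submodule of consistent sequences in
the product `∀ i, V i`. -/
def invLim (K : Type) [Field K] (V : ℕ → Type) [∀ i, AddCommGroup (V i)]
    [∀ i, Module K (V i)] (q : ∀ i, V (i + 1) →ₗ[K] V i) : Submodule K (∀ i, V i) where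
  carrier := {v | ∀ i, q i (v (i + 1)) = v i}
  add_mem' := by intro a b ha hb i; simp [ha i, hb i]
  zero_mem' := by intro i; simp
  smul_mem' := by intro c a ha i; simp [ha i]

/-- The canonical projection `Q i` from the inverse limit to the `i`-th stage. -/
def invLimProj (K : Type) [Field K] (V : ℕ → Type) [∀ i, AddCommGroup (V i)]
    [∀ i, Module K (V i)] (q : ∀ i, V (i + 1) →ₗ[K] V i) (i : ℕ) :
    ↥(invLim K V q) →ₗ[K] V i :=
  (LinearMap.proj i).comp (invLim K V q).subtype

/-- The composite connecting map `q^j_i : V j → V i` for `i ≤ j`. -/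
def qIter (K : Type) [Field K] (V : ℕ → Type) [∀ i, AddCommGroup (V i)]
    [∀ i, Module K (V i)] (q : ∀ i, V (i + 1) →ₗ[K] V i) (i : ℕ) :
    ∀ j, i ≤ j → (V j →ₗ[K] V i)
  | 0, h => by
    have hi : i = 0 := Nat.le_zero.mp h
    subst hi; exact LinearMap.id
  | j + 1, h =>
    if heq : i = j + 1 then by subst heq; exact LinearMap.id
    else (qIter K V q i j (by omega)).comp (q j)


/-- Any submodule of `K^m` is closed when `K` is a T2 topological ring. -/
lemma submodule_closed_aux (K : Type) [Field K] [TopologicalSpace K] [IsTopologicalRing K]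
    [T2Space K] (m : ℕ) (S : Submodule K (Fin m → K)) : IsClosed (S : Set (Fin m → K)) := by
  obtain ⟨T, hT⟩ := S.exists_isCompl
  set f := T.subtype.comp (Submodule.projectionOnto T S hT.symm) with hf
  have hS : (S : Set (Fin m → K)) = f ⁻¹' {0} := by
    ext x
    simp [hf, Submodule.projectionOnto_apply_eq_zero_iff, Submodule.coe_eq_zero]
  rw [hS]
  exact (isClosed_singleton).preimage f.continuous_on_pi

lemma qIter_compat (K : Type) [Field K] (V : ℕ → Type) [∀ i, AddCommGroup (V i)]
    [∀ i, Module K (V i)] (q : ∀ i, V (i + 1) →ₗ[K] V i)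
    (v : ∀ i, V i) (hv : v ∈ invLim K V q) (i : ℕ) :
    ∀ j (h : i ≤ j), qIter K V q i j h (v j) = v i := by
  intro j
  induction j with
  | zero =>
    intro h
    have hi : i = 0 := Nat.le_zero.mp h
    subst hi
    simp [qIter]
  | succ j ih =>
    intro h
    by_cases heq : i = j + 1
    · subst heq; simp [qIter]
    · have h' : i ≤ j := by omega
      simp only [qIter, dif_neg heq, LinearMap.comp_apply]
      rw [hv j]
      exact ih h'

/-- For a pro-finite-dimensional space `V = lim V_i` over a (Hausdorff)
topological field `K`, with quotient maps `Q i`, a vector subspace `W ≤ V` is closed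
in the inverse-limit topology iff `W = ⋂ i, Q i ⁻¹ (Q i '' W)`. -/
theorem stmt0 (K : Type) [Field K] [TopologicalSpace K] [IsTopologicalDivisionRing K] [T2Space K]
    (n : ℕ → ℕ) (q : ∀ i, (Fin (n (i + 1)) → K) →ₗ[K] (Fin (n i) → K))
    (hq : ∀ i, Continuous (q i))
    (W : Submodule K ↥(invLim K (fun i => Fin (n i) → K) q)) :
    IsClosed (W : Set ↥(invLim K (fun i => Fin (n i) → K) q)) ↔
      (W : Set ↥(invLim K (fun i => Fin (n i) → K) q)) =
        ⋂ i, (invLimProj K (fun i => Fin (n i) → K) q i) ⁻¹'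
          ((invLimProj K (fun i => Fin (n i) → K) q i) ''
            (W : Set ↥(invLim K (fun i => Fin (n i) → K) q))) := by
  have VVdef : True := trivial
  let VV := fun i => Fin (n i) → K
  let Q := invLimProj K VV q
  have hQcont : ∀ i, Continuous (Q i) := fun i =>
    (continuous_apply i).comp continuous_subtype_val
  constructor
  · -- closed → equality
    intro hcl
    apply Set.Subset.antisymm
    · intro x hx
      exact Set.mem_iInter.mpr fun i => ⟨x, hx, rfl⟩
    · intro v hv
      simp only [Set.mem_iInter, Set.mem_preimage] at hv
      -- choose w N ∈ W with Q N (w N) = Q N v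
      choose w hwW hwQ using hv
      -- coordinates agree up to N
      have hagree : ∀ i N, i ≤ N → (w N : ∀ j, VV j) i = (v : ∀ j, VV j) i := by
        intro i N hiN
        have h1 := qIter_compat K VV q (w N : ∀ j, VV j) (w N).2 i N hiN
        have h2 := qIter_compat K VV q (v : ∀ j, VV j) v.2 i N hiN
        have hQN : (w N : ∀ j, VV j) N = (v : ∀ j, VV j) N := hwQ N
        rw [← h1, ← h2, hQN]
      have htend : Filter.Tendsto w Filter.atTop (nhds v) := by
        rw [tendsto_subtype_rng]
        rw [tendsto_pi_nhds]
        intro i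
        apply Filter.Tendsto.congr' (f₁ := fun _ => (v : ∀ j, VV j) i)
        · filter_upwards [Filter.eventually_ge_atTop i] with N hN
          exact (hagree i N hN).symm
        · exact tendsto_const_nhds
      exact hcl.mem_of_tendsto htend (Filter.Eventually.of_forall hwW)
  · -- equality → closed
    intro heq
    rw [heq]
    apply isClosed_iInter
    intro i
    have himg : (Q i) '' (W : Set _) = ((W.map (Q i) : Submodule K (VV i)) : Set (VV i)) := by
      simp [Submodule.map_coe]
    rw [himg]
    exact (submodule_closed_aux K (n i) (W.map (Q i))).preimage (hQcont i)
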